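/- Let 𝔏 = ⊕_{n∈ℤ} 𝔏_n be a graded Lie algebra over ℂ with a bilinear form B on its local part satisfying conditions (i)–(v). (a) If the adjoint action of 𝔏₀ on 𝔏₁ and the adjoint action of 𝔏₀ on 𝔏_{−1} are both faithful (x ∈ 𝔏₀ with [x, 𝔏₁] = 0 implies x = 0, and likewise for 𝔏_{−1}) and surjective ([𝔏₀, 𝔏₁] = 𝔏₁ and [𝔏₀, 𝔏_{−1}] = 𝔏_{−1}), then 𝔏 is transitive. (b) If moreover 𝔏₁ and 𝔏_{−1} are finite-dimensional, then 𝔏 is transitive if and only if both adjoint actions of 𝔏₀ on 𝔏₁ and on 𝔏_{−1} are faithful and surjective. -/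

import Mathlib

/-- A graded Lie algebra `L = ⊕ G i` together with a bilinear form `B` on its local part
(encoded as a bilinear form on `L`, only its restriction to the local part matters),
satisfying conditions (i)–(v) of the paper. -/
def GoodGrading (L : Type) [LieRing L] [LieAlgebra ℂ L] (G : ℤ → Submodule ℂ L)
    (B : LinearMap.BilinForm ℂ L) : Prop :=
  iSupIndep G ∧ (⨆ i, G i) = ⊤ ∧
  (∀ i j : ℤ, ∀ x ∈ G i, ∀ y ∈ G j, ⁅x, y⁆ ∈ G (i + j)) ∧
  (LieSubalgebra.lieSpan ℂ L ((G (-1) : Set L) ∪ (G 0 : Set L) ∪ (G 1 : Set L)) = ⊤) ∧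
  (∀ i : ℤ, 1 ≤ i →
    G (i + 1) = Submodule.span ℂ {z : L | ∃ x ∈ G 1, ∃ y ∈ G i, z = ⁅x, y⁆} ∧
    G (-(i + 1)) = Submodule.span ℂ {z : L | ∃ x ∈ G (-1), ∃ y ∈ G (-i), z = ⁅x, y⁆}) ∧
  (∀ i : ℤ, (i = 0 ∨ i = 1) →
    (∀ x ∈ G i, (∀ y ∈ G (-i), B x y = 0) → x = 0) ∧
    (∀ y ∈ G (-i), (∀ x ∈ G i, B x y = 0) → y = 0) ∧
    (∀ a ∈ G 0, ∀ x ∈ G i, ∀ y ∈ G (-i), B ⁅a, x⁆ y + B x ⁅a, y⁆ = 0)) ∧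
  (∀ a ∈ G 0, ∀ x ∈ G 1, ∀ y ∈ G (-1), B a ⁅x, y⁆ = B ⁅a, x⁆ y) ∧
  (∀ i : ℤ, 2 ≤ i → ∀ x ∈ G i, (∀ y ∈ G (-1), ⁅x, y⁆ = 0) → x = 0) ∧
  (∀ i : ℤ, i ≤ -2 → ∀ x ∈ G i, (∀ y ∈ G 1, ⁅x, y⁆ = 0) → x = 0)

/-- Transitivity of a graded Lie algebra in the sense of Kac. -/
def TransitiveGr (L : Type) [LieRing L] [LieAlgebra ℂ L] (G : ℤ → Submodule ℂ L) : Prop :=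
  (∀ i : ℤ, 0 ≤ i → ∀ x ∈ G i, (∀ y ∈ G (-1), ⁅x, y⁆ = 0) → x = 0) ∧
  (∀ i : ℤ, i ≤ 0 → ∀ x ∈ G i, (∀ y ∈ G 1, ⁅x, y⁆ = 0) → x = 0)

/-- The adjoint actions of `G 0` on `G 1` and `G (-1)` are faithful and surjective. -/
def FaithfulSurj (L : Type) [LieRing L] [LieAlgebra ℂ L] (G : ℤ → Submodule ℂ L) : Prop :=
  (∀ x ∈ G 0, (∀ y ∈ G 1, ⁅x, y⁆ = 0) → x = 0) ∧
  (∀ x ∈ G 0, (∀ y ∈ G (-1), ⁅x, y⁆ = 0) → x = 0) ∧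
  Submodule.span ℂ {z : L | ∃ x ∈ G 0, ∃ y ∈ G 1, z = ⁅x, y⁆} = G 1 ∧
  Submodule.span ℂ {z : L | ∃ x ∈ G 0, ∃ y ∈ G (-1), z = ⁅x, y⁆} = G (-1)

/-- (a) If the adjoint actions of `𝔏₀` on `𝔏₁` and on `𝔏₋₁` are faithful
and surjective, then `𝔏` is transitive.  (b) If moreover `𝔏₁` and `𝔏₋₁` are
finite-dimensional, then transitivity is equivalent to faithfulness and surjectivity of
these two actions. -/
lemma ann_exists {L : Type} [AddCommGroup L] [Module ℂ L]
    (V W : Submodule ℂ L) [FiniteDimensional ℂ V] [FiniteDimensional ℂ W]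
    (B : LinearMap.BilinForm ℂ L)
    (hV : ∀ x ∈ V, (∀ y ∈ W, B x y = 0) → x = 0)
    (M : Submodule ℂ L) (hM : M ≤ V) (hne : M ≠ V) :
    ∃ y ∈ W, y ≠ 0 ∧ ∀ x ∈ M, B x y = 0 := by
  by_contra hc
  push_neg at hc
  have hMfd : FiniteDimensional ℂ M := by
    have : FiniteDimensional ℂ (M.comap V.subtype) := inferInstance
    exact FiniteDimensional.of_injective (Submodule.comapSubtypeEquivOfLe hM).symm.toLinearMap
      (Submodule.comapSubtypeEquivOfLe hM).symm.injective
  have h1 : Module.finrank ℂ V ≤ Module.finrank ℂ W := by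
    have hinj : Function.Injective (B.domRestrict₁₂ V W) := by
      rw [← LinearMap.ker_eq_bot, LinearMap.ker_eq_bot']
      rintro ⟨x, hx⟩ h0
      have : x = 0 := hV x hx (fun y hy => by
        have := congrArg (fun f => f ⟨y, hy⟩) h0
        simpa [LinearMap.domRestrict₁₂_apply] using this)
      simpa using this
    calc Module.finrank ℂ V ≤ Module.finrank ℂ (↥W →ₗ[ℂ] ℂ) :=
          LinearMap.finrank_le_finrank_of_injective hinj
      _ = Module.finrank ℂ W := Subspace.dual_finrank_eq
  have h2 : Module.finrank ℂ W ≤ Module.finrank ℂ M := by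
    have hinj : Function.Injective (B.flip.domRestrict₁₂ W M) := by
      rw [← LinearMap.ker_eq_bot, LinearMap.ker_eq_bot']
      rintro ⟨y, hy⟩ h0
      have : y = 0 := by
        by_contra hy0
        obtain ⟨x, hx, hBx⟩ := hc y hy hy0
        apply hBx
        have := congrArg (fun f => f ⟨x, hx⟩) h0
        simpa [LinearMap.domRestrict₁₂_apply] using this
      simpa using this
    calc Module.finrank ℂ W ≤ Module.finrank ℂ (↥M →ₗ[ℂ] ℂ) :=
          LinearMap.finrank_le_finrank_of_injective hinj
      _ = Module.finrank ℂ M := Subspace.dual_finrank_eq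
  have h3 : Module.finrank ℂ M ≤ Module.finrank ℂ V := by
    rw [← (Submodule.comapSubtypeEquivOfLe hM).finrank_eq]
    exact Submodule.finrank_le (M.comap V.subtype)
  have heq : Module.finrank ℂ (M.comap V.subtype) = Module.finrank ℂ V := by
    rw [(Submodule.comapSubtypeEquivOfLe hM).finrank_eq]
    omega
  have htop : M.comap V.subtype = ⊤ := Submodule.eq_top_of_finrank_eq heq
  apply hne
  refine le_antisymm hM (fun x hx => ?_)
  exact (htop ▸ Submodule.mem_top : (⟨x, hx⟩ : V) ∈ M.comap V.subtype)

theorem stmt_3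
    (L : Type) [LieRing L] [LieAlgebra ℂ L]
    (G : ℤ → Submodule ℂ L)
    (B : LinearMap.BilinForm ℂ L)
    (hG : GoodGrading L G B) :
    (FaithfulSurj L G → TransitiveGr L G) ∧
    (FiniteDimensional ℂ ↥(G 1) → FiniteDimensional ℂ ↥(G (-1)) →
      (TransitiveGr L G ↔ FaithfulSurj L G)) := by
  obtain ⟨hind, hsup, hBr, hgen, hi, hii, hiii, hiv, hv⟩ := hG
  obtain ⟨nd1L, nd1R, inv1⟩ := hii 1 (Or.inr rfl)
  have h0 := hii 0 (Or.inl rfl)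
  simp only [neg_zero] at h0
  obtain ⟨nd0L, nd0R, inv0⟩ := h0
  have partA : FaithfulSurj L G → TransitiveGr L G := by
    rintro ⟨f1, fm1, s1, sm1⟩
    constructor
    · intro i hi0 x hx hxy
      rcases (show i = 0 ∨ i = 1 ∨ 2 ≤ i by omega) with h | h | h
      · subst h; exact fm1 x hx hxy
      · subst h
        apply nd1L x hx
        intro w hw
        have hwle : G (-1) ≤ LinearMap.ker (B x) := by
          rw [← sm1, Submodule.span_le]
          rintro z ⟨a, ha, y, hy, rfl⟩
          have e1 := inv1 a ha x hx y hy
          have e2 := hiii a ha x hx y hy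
          have e3 : B a ⁅x, y⁆ = 0 := by rw [hxy y hy]; simp
          simp only [SetLike.mem_coe, LinearMap.mem_ker]
          linear_combination e1 + e2 - e3
        exact hwle hw
      · exact hiv i h x hx hxy
    · intro i hi0 x hx hxy
      rcases (show i = 0 ∨ i = -1 ∨ i ≤ -2 by omega) with h | h | h
      · subst h; exact f1 x hx hxy
      · subst h
        apply nd1R x hx
        intro z hz
        have hzle : G 1 ≤ LinearMap.ker (B.flip x) := by
          rw [← s1, Submodule.span_le]
          rintro z ⟨a, ha, y, hy, rfl⟩
          have e2 := hiii a ha y hy x hx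
          have e3 : ⁅y, x⁆ = 0 := by rw [← lie_skew, hxy y hy, neg_zero]
          simp only [SetLike.mem_coe, LinearMap.mem_ker]
          have hfl : B.flip x ⁅a, y⁆ = B ⁅a, y⁆ x := rfl
          rw [hfl, ← e2, e3]; simp
        exact hzle hz
      · exact hv i h x hx hxy
  refine ⟨partA, fun hfd1 hfdm1 => ⟨fun htr => ?_, partA⟩⟩
  obtain ⟨htr1, htr2⟩ := htr
  refine ⟨fun x hx h => htr2 0 le_rfl x hx h, fun x hx h => htr1 0 le_rfl x hx h, ?_, ?_⟩
  · -- surjectivity onto G 1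
    by_contra hne
    have hMle : Submodule.span ℂ {z : L | ∃ x ∈ G 0, ∃ y ∈ G 1, z = ⁅x, y⁆} ≤ G 1 := by
      rw [Submodule.span_le]
      rintro z ⟨a, ha, y, hy, rfl⟩
      have := hBr 0 1 a ha y hy
      norm_num at this
      exact this
    obtain ⟨y0, hy0W, hy0ne, hann⟩ := ann_exists (G 1) (G (-1)) B nd1L _ hMle hne
    have key : ∀ x ∈ G 1, ⁅x, y0⁆ = 0 := by
      intro x hx
      have hmem : ⁅x, y0⁆ ∈ G 0 := by
        have := hBr 1 (-1) x hx y0 hy0W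
        norm_num at this
        exact this
      apply nd0R ⁅x, y0⁆ hmem
      intro a ha
      rw [hiii a ha x hx y0 hy0W]
      exact hann ⁅a, x⁆ (Submodule.subset_span ⟨a, ha, x, hx, rfl⟩)
    refine hy0ne (htr2 (-1) (by norm_num) y0 hy0W (fun z hz => ?_))
    rw [← lie_skew, key z hz, neg_zero]
  · -- surjectivity onto G (-1)
    by_contra hne
    have hMle : Submodule.span ℂ {z : L | ∃ x ∈ G 0, ∃ y ∈ G (-1), z = ⁅x, y⁆} ≤ G (-1) := by
      rw [Submodule.span_le]
      rintro z ⟨a, ha, y, hy, rfl⟩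
      have := hBr 0 (-1) a ha y hy
      norm_num at this
      exact this
    obtain ⟨x0, hx0W, hx0ne, hann⟩ := ann_exists (G (-1)) (G 1) B.flip
      (fun x hx h => nd1R x hx (fun z hz => h z hz)) _ hMle hne
    have key : ∀ w ∈ G (-1), ⁅x0, w⁆ = 0 := by
      intro w hw
      have hmem : ⁅x0, w⁆ ∈ G 0 := by
        have := hBr 1 (-1) x0 hx0W w hw
        norm_num at this
        exact this
      apply nd0R ⁅x0, w⁆ hmem
      intro a ha
      have e1 := inv1 a ha x0 hx0W w hw
      have e2 := hiii a ha x0 hx0W w hw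
      have e3 : B.flip ⁅a, w⁆ x0 = 0 :=
        hann ⁅a, w⁆ (Submodule.subset_span ⟨a, ha, w, hw, rfl⟩)
      have hfl : B.flip ⁅a, w⁆ x0 = B x0 ⁅a, w⁆ := rfl
      rw [hfl] at e3
      linear_combination e2 + e1 - e3
    exact hx0ne (htr1 1 (by norm_num) x0 hx0W key)
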